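/- Let U be a finite type, A : Fin m → Finset U a family of finite sets, and l ≥ 1 a natural number. Let OPT = max over index sets e with |e| ≤ l of |⋃_{j ∈ e} A_j|. Consider any greedy sequence of index sets e_0 = ∅ and e_{t+1} = e_t ∪ {j_t}, where at each step j_t is chosen to maximize the number of newly covered elements |⋃_{j ∈ e_t ∪ {j}} A_j| − |⋃_{j ∈ e_t} A_j| over all indices j. Then the greedy solution after l steps satisfies |⋃_{j ∈ e_l} A_j| ≥ (1 − (1 − 1/l)^l) · OPT ≥ (1 − 1/e) · OPT, where e is Euler's number. -/

import Mathlib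

/-- greedy approximation for maximum coverage: any greedy sequence,
starting from `∅` and at each step inserting an index maximizing the coverage gain,
achieves after `l` steps at least `(1 - (1 - 1/l)^l) · OPT ≥ (1 - 1/e) · OPT`, where
`OPT` is the optimal coverage with at most `l` indices. -/
theorem greedy_max_coverage_guarantee {m : ℕ} {U : Type*} [Fintype U] [DecidableEq U]
    (A : Fin m → Finset U) (l : ℕ) (hl : 1 ≤ l)
    (e : ℕ → Finset (Fin m)) (h0 : e 0 = ∅)
    (hgreedy : ∀ t : ℕ, ∃ j : Fin m,
      e (t + 1) = insert j (e t) ∧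
      ∀ j' : Fin m, ((insert j' (e t)).biUnion A).card ≤ ((insert j (e t)).biUnion A).card)
    (OPT : ℕ)
    (hOPT : IsGreatest {s : ℕ | ∃ e' : Finset (Fin m), e'.card ≤ l ∧
      s = (e'.biUnion A).card} OPT) :
    (1 - (1 - 1 / (l : ℝ)) ^ l) * OPT ≤ (((e l).biUnion A).card : ℝ) ∧
    (1 - 1 / Real.exp 1) * OPT ≤ (1 - (1 - 1 / (l : ℝ)) ^ l) * OPT := by
  classical
  obtain ⟨⟨eopt, hcard, hOPTeq⟩, _⟩ := hOPT
  set F : ℕ → ℝ := fun t => (((e t).biUnion A).card : ℝ) with hF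
  have hl0 : (0 : ℝ) < l := by exact_mod_cast hl
  have hinv : 1 / (l : ℝ) ≤ 1 := by
    rw [div_le_one hl0]; exact_mod_cast hl
  have h1nn : (0 : ℝ) ≤ 1 - 1 / (l : ℝ) := by linarith
  -- key marginal gain inequality
  have key : ∀ t : ℕ, (OPT : ℝ) - F t ≤ l * (F (t + 1) - F t) := by
    intro t
    obtain ⟨j, hj1, hj2⟩ := hgreedy t
    set S := (e t).biUnion A with hS
    have hins : ∀ j' : Fin m, ((insert j' (e t)).biUnion A).card
        = (A j' \ S).card + S.card := by
      intro j'
      rw [Finset.biUnion_insert, ← Finset.card_sdiff_add_card]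
    have hnat : OPT ≤ S.card + l * (A j \ S).card := by
      have h1 : (eopt.biUnion A).card ≤ ((eopt.biUnion A) \ S).card + S.card :=
        Finset.card_le_card_sdiff_add_card
      have h2 : (eopt.biUnion A) \ S ⊆ eopt.biUnion (fun i => A i \ S) := by
        intro x hx
        simp only [Finset.mem_sdiff, Finset.mem_biUnion] at hx ⊢
        obtain ⟨⟨i, hi, hxi⟩, hxS⟩ := hx
        exact ⟨i, hi, hxi, hxS⟩
      have h3 : ((eopt.biUnion A) \ S).card ≤ ∑ i ∈ eopt, (A i \ S).card :=
        le_trans (Finset.card_le_card h2) (Finset.card_biUnion_le)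
      have h4 : ∀ i ∈ eopt, (A i \ S).card ≤ (A j \ S).card := by
        intro i _
        have := hj2 i
        rw [hins i, hins j] at this
        omega
      have h5 : ∑ i ∈ eopt, (A i \ S).card ≤ eopt.card * (A j \ S).card := by
        calc ∑ i ∈ eopt, (A i \ S).card ≤ eopt.card • (A j \ S).card :=
              Finset.sum_le_card_nsmul _ _ _ h4
          _ = eopt.card * (A j \ S).card := by rw [smul_eq_mul]
      have h6 : eopt.card * (A j \ S).card ≤ l * (A j \ S).card :=
        Nat.mul_le_mul_right _ hcard
      omega
    have hstep : F (t + 1) = ((A j \ S).card : ℝ) + F t := by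
      simp only [hF, hj1, hins j]
      push_cast; ring
    have hcast : (OPT : ℝ) ≤ (S.card : ℝ) + l * (A j \ S).card := by exact_mod_cast hnat
    have hFt : F t = (S.card : ℝ) := rfl
    have hdiff : F (t + 1) - F t = ((A j \ S).card : ℝ) := by rw [hstep, hFt]; ring
    rw [hdiff, hFt]
    linarith
  have main : ∀ t : ℕ, (OPT : ℝ) - F t ≤ (1 - 1 / (l : ℝ)) ^ t * OPT := by
    intro t
    induction t with
    | zero =>
      simp only [hF, h0, Finset.biUnion_empty, Finset.card_empty, Nat.cast_zero, pow_zero,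
        one_mul]
      linarith
    | succ t ih =>
      have hk := key t
      have hdiv : ((OPT : ℝ) - F t) / l ≤ F (t + 1) - F t := by
        rw [div_le_iff₀ hl0]; linarith [hk]
      have hmul : (1 - 1 / (l : ℝ)) * ((OPT : ℝ) - F t)
          = ((OPT : ℝ) - F t) - ((OPT : ℝ) - F t) / l := by
        field_simp
      have step1 : (OPT : ℝ) - F (t + 1) ≤ (1 - 1 / (l : ℝ)) * ((OPT : ℝ) - F t) := by
        rw [hmul]; linarith
      have step2 : (1 - 1 / (l : ℝ)) * ((OPT : ℝ) - F t)
          ≤ (1 - 1 / (l : ℝ)) * ((1 - 1 / (l : ℝ)) ^ t * OPT) :=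
        mul_le_mul_of_nonneg_left ih h1nn
      calc (OPT : ℝ) - F (t + 1) ≤ (1 - 1 / (l : ℝ)) * ((1 - 1 / (l : ℝ)) ^ t * OPT) :=
            le_trans step1 step2
        _ = (1 - 1 / (l : ℝ)) ^ (t + 1) * OPT := by ring
  constructor
  · have h := main l
    have : (1 - (1 - 1 / (l : ℝ)) ^ l) * OPT = OPT - (1 - 1 / (l : ℝ)) ^ l * OPT := by ring
    rw [this]
    linarith
  · have hOPTnn : (0 : ℝ) ≤ (OPT : ℕ) := Nat.cast_nonneg _
    have hexp : (1 - 1 / (l : ℝ)) ^ l ≤ 1 / Real.exp 1 := by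
      have h1 : 1 - 1 / (l : ℝ) ≤ Real.exp (-(1 / l)) := by
        have := Real.add_one_le_exp (-(1 / (l : ℝ)))
        linarith
      have h2 : (1 - 1 / (l : ℝ)) ^ l ≤ Real.exp (-(1 / l)) ^ l :=
        pow_le_pow_left₀ h1nn h1 l
      have h3 : Real.exp (-(1 / (l : ℝ))) ^ l = Real.exp (-1) := by
        rw [← Real.exp_nat_mul]
        congr 1
        field_simp
      rw [h3] at h2
      rw [Real.exp_neg] at h2
      rwa [← one_div] at h2
    apply mul_le_mul_of_nonneg_right _ hOPTnn
    linarith
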